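/- Let $T>0$, $d \in \mathbb{N}$ with $d \ge 1$, $R \in \mathbb{R}$, and for $k = 1,\dots,d$ let $b_k > 0$, $\delta_k \in \mathbb{R}$, $c_k > 0$ with $\sum_{k=1}^d c_k = 1$. Set $\check{b}^2 = \sum_{k=1}^d (b_k c_k)^2$ and $\check{\delta} = \sum_{k=1}^d c_k(\delta_k + b_k^2/2) - \check{b}^2/2$. Suppose $w : [0,T) \times (0,\infty) \to \mathbb{R}$ is twice continuously differentiable in $s$ and continuously differentiable in $t$ and satisfies $\partial_t w(t,s) + (R - \check{\delta})\, s\, \partial_s w(t,s) + \tfrac{1}{2}\check{b}^2 s^2\, \partial_{ss} w(t,s) - R\, w(t,s) = 0$ for all $(t,s) \in [0,T) \times (0,\infty)$. Define $u(t,x) = w\big(t, \prod_{k=1}^d x_k^{c_k}\big)$ for $(t,x) \in [0,T) \times (0,\infty)^d$. Then $u$ satisfies $\partial_t u(t,x) + \sum_{k=1}^d (R - \delta_k)\, x_k\, \partial_{x_k} u(t,x) + \tfrac{1}{2}\sum_{k=1}^d b_k^2 x_k^2\, \partial_{x_k x_k} u(t,x) - R\, u(t,x) = 0$ for all $(t,x)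 \in [0,T) \times (0,\infty)^d$. -/

import Mathlib

open Real

/-- Dimension reduction for the high-dimensional Black-Scholes PDE: if `w` solves the
one-dimensional Black-Scholes PDE with effective volatility `b̌` (where
`b̌² = ∑ (b_k c_k)²`) and effective dividend rate `δ̌ = ∑ c_k(δ_k + b_k²/2) - b̌²/2`,
then `u(t,x) = w(t, ∏ x_k^{c_k})` solves the `d`-dimensional Black-Scholes PDE. -/
theorem stmt7 (T : ℝ) (hT : 0 < T) (d : ℕ) (hd : 1 ≤ d) (R : ℝ)
    (b δv c : Fin d → ℝ) (hb : ∀ k, 0 < b k) (hc : ∀ k, 0 < c k)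
    (hcsum : ∑ k, c k = 1)
    (bc δc : ℝ)
    (hbc : bc = Real.sqrt (∑ k, (b k * c k) ^ 2))
    (hδc : δc = ∑ k, c k * (δv k + b k ^ 2 / 2) - bc ^ 2 / 2)
    (w : ℝ → ℝ → ℝ)
    (hws : ∀ t ∈ Set.Ico (0 : ℝ) T, ContDiffOn ℝ 2 (fun s => w t s) (Set.Ioi 0))
    (hwt : ∀ s ∈ Set.Ioi (0 : ℝ), ContDiffOn ℝ 1 (fun t => w t s) (Set.Ico 0 T))
    (hpde : ∀ t ∈ Set.Ico (0 : ℝ) T, ∀ s ∈ Set.Ioi (0 : ℝ),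
      deriv (fun r => w r s) t + (R - δc) * s * deriv (fun y => w t y) s
        + 1 / 2 * bc ^ 2 * s ^ 2 * deriv (fun y => deriv (fun z => w t z) y) s
        - R * w t s = 0)
    (u : ℝ → (Fin d → ℝ) → ℝ)
    (hu : ∀ t x, u t x = w t (∏ k, x k ^ c k)) :
    ∀ t ∈ Set.Ico (0 : ℝ) T, ∀ x : Fin d → ℝ, (∀ k, 0 < x k) →
      deriv (fun s => u s x) t
        + ∑ k, (R - δv k) * x k * deriv (fun s => u t (Function.update x k s)) (x k)
        + 1 / 2 * ∑ k, b k ^ 2 * x k ^ 2 *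
            deriv (fun s => deriv (fun r => u t (Function.update x k r)) s) (x k)
        - R * u t x = 0 := by
  intro t ht x hx
  simp only [hu]
  set s₀ : ℝ := ∏ k, x k ^ c k with hs₀def
  set Ck : Fin d → ℝ := fun k => ∏ j ∈ Finset.univ.erase k, x j ^ c j with hCkdef
  have hs₀ : 0 < s₀ := Finset.prod_pos fun k _ => Real.rpow_pos_of_pos (hx k) _
  have hCk : ∀ k, 0 < Ck k := fun k => Finset.prod_pos fun j _ => Real.rpow_pos_of_pos (hx j) _
  have hs₀k : ∀ k, s₀ = x k ^ c k * Ck k := fun k =>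
    (Finset.mul_prod_erase Finset.univ (fun j => x j ^ c j) (Finset.mem_univ k)).symm
  have hupd : ∀ (k : Fin d) (s : ℝ),
      (∏ j, Function.update x k s j ^ c j) = s ^ c k * Ck k := by
    intro k s
    rw [← Finset.mul_prod_erase Finset.univ (fun j => Function.update x k s j ^ c j)
      (Finset.mem_univ k), Function.update_self]
    congr 1
    refine Finset.prod_congr rfl fun j hj => ?_
    rw [Function.update_of_ne (Finset.ne_of_mem_erase hj)]
  simp only [hupd]
  -- regularity of w in the space variable
  have hW2 : ContDiffOn ℝ 2 (fun y => w t y) (Set.Ioi 0) := hws t ht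
  have hW1 : ContDiffOn ℝ 1 (deriv (fun y => w t y)) (Set.Ioi 0) :=
    hW2.deriv_of_isOpen isOpen_Ioi (by norm_num)
  -- derivative of the composed function
  have hgd : ∀ (k : Fin d) (s : ℝ), 0 < s →
      HasDerivAt (fun r : ℝ => w t (r ^ c k * Ck k))
        (deriv (fun y => w t y) (s ^ c k * Ck k) * (c k * s ^ (c k - 1) * Ck k)) s := by
    intro k s hs
    have hins : (0:ℝ) < s ^ c k * Ck k := mul_pos (Real.rpow_pos_of_pos hs _) (hCk k)
    have h1 : HasDerivAt (fun y => w t y)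
        (deriv (fun y => w t y) (s ^ c k * Ck k)) (s ^ c k * Ck k) :=
      ((hW2.contDiffAt (isOpen_Ioi.mem_nhds hins)).differentiableAt (by norm_num)).hasDerivAt
    exact h1.comp s ((Real.hasDerivAt_rpow_const (Or.inl hs.ne')).mul_const _)
  have E1 : ∀ k : Fin d, deriv (fun s => w t (s ^ c k * Ck k)) (x k)
      = deriv (fun y => w t y) s₀ * (c k * x k ^ (c k - 1) * Ck k) := by
    intro k
    rw [hs₀k k]
    exact (hgd k (x k) (hx k)).deriv
  have E2 : ∀ k : Fin d, deriv (fun s => deriv (fun r => w t (r ^ c k * Ck k)) s) (x k)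
      = deriv (fun y => deriv (fun z => w t z) y) s₀ * (c k * x k ^ (c k - 1) * Ck k)
          * (c k * x k ^ (c k - 1) * Ck k)
        + deriv (fun y => w t y) s₀ * (c k * ((c k - 1) * x k ^ (c k - 1 - 1)) * Ck k) := by
    intro k
    have heq : (fun s : ℝ => deriv (fun r => w t (r ^ c k * Ck k)) s)
        =ᶠ[nhds (x k)] fun s =>
          deriv (fun y => w t y) (s ^ c k * Ck k) * (c k * s ^ (c k - 1) * Ck k) := by
      filter_upwards [isOpen_Ioi.mem_nhds (hx k)] with s hs
      exact (hgd k s hs).deriv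
    rw [heq.deriv_eq]
    have hins : (0:ℝ) < x k ^ c k * Ck k := mul_pos (Real.rpow_pos_of_pos (hx k) _) (hCk k)
    have hd : HasDerivAt (deriv (fun y => w t y))
        (deriv (fun y => deriv (fun z => w t z) y) (x k ^ c k * Ck k)) (x k ^ c k * Ck k) :=
      ((hW1.contDiffAt (isOpen_Ioi.mem_nhds hins)).differentiableAt (by norm_num)).hasDerivAt
    have h1 : HasDerivAt (fun s : ℝ => deriv (fun y => w t y) (s ^ c k * Ck k))
        (deriv (fun y => deriv (fun z => w t z) y) (x k ^ c k * Ck k)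
          * (c k * x k ^ (c k - 1) * Ck k)) (x k) :=
      by have := hd.comp (x k) ((Real.hasDerivAt_rpow_const (p := c k) (Or.inl (hx k).ne')).mul_const (Ck k)); exact this
    have h2 : HasDerivAt (fun s : ℝ => c k * s ^ (c k - 1) * Ck k)
        (c k * ((c k - 1) * x k ^ (c k - 1 - 1)) * Ck k) (x k) :=
      ((Real.hasDerivAt_rpow_const (Or.inl (hx k).ne')).const_mul (c k)).mul_const _
    have h4 : HasDerivAt (fun s : ℝ =>
        deriv (fun y => w t y) (s ^ c k * Ck k) * (c k * s ^ (c k - 1) * Ck k))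
        (deriv (fun y => deriv (fun z => w t z) y) (x k ^ c k * Ck k)
            * (c k * x k ^ (c k - 1) * Ck k) * (c k * x k ^ (c k - 1) * Ck k)
          + deriv (fun y => w t y) (x k ^ c k * Ck k)
            * (c k * ((c k - 1) * x k ^ (c k - 1 - 1)) * Ck k)) (x k) := h1.mul h2
    rw [h4.deriv, ← hs₀k k]
  simp only [E1, E2]
  have hB : bc ^ 2 = ∑ k, (b k * c k) ^ 2 := by
    rw [hbc]
    exact Real.sq_sqrt (Finset.sum_nonneg fun k _ => sq_nonneg _)
  have combined :
      (∑ k, (R - δv k) * x k *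
          (deriv (fun y => w t y) s₀ * (c k * x k ^ (c k - 1) * Ck k)))
        + 1 / 2 * ∑ k, b k ^ 2 * x k ^ 2 *
          (deriv (fun y => deriv (fun z => w t z) y) s₀ * (c k * x k ^ (c k - 1) * Ck k)
              * (c k * x k ^ (c k - 1) * Ck k)
            + deriv (fun y => w t y) s₀ * (c k * ((c k - 1) * x k ^ (c k - 1 - 1)) * Ck k))
      = (R - δc) * s₀ * deriv (fun y => w t y) s₀
        + 1 / 2 * bc ^ 2 * s₀ ^ 2 * deriv (fun y => deriv (fun z => w t z) y) s₀ := by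
    have step : ∀ k ∈ (Finset.univ : Finset (Fin d)),
        (R - δv k) * x k * (deriv (fun y => w t y) s₀ * (c k * x k ^ (c k - 1) * Ck k))
          + 1 / 2 * (b k ^ 2 * x k ^ 2 *
            (deriv (fun y => deriv (fun z => w t z) y) s₀ * (c k * x k ^ (c k - 1) * Ck k)
                * (c k * x k ^ (c k - 1) * Ck k)
              + deriv (fun y => w t y) s₀ * (c k * ((c k - 1) * x k ^ (c k - 1 - 1)) * Ck k)))
        = (R * c k - c k * (δv k + b k ^ 2 / 2) + (b k * c k) ^ 2 / 2)
            * (s₀ * deriv (fun y => w t y) s₀)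
          + (b k * c k) ^ 2 / 2 * (s₀ ^ 2 * deriv (fun y => deriv (fun z => w t z) y) s₀) := by
      intro k _
      have hp : x k ^ (c k - 1) * x k = x k ^ c k := by
        rw [← Real.rpow_add_one (hx k).ne']; norm_num
      have hq : x k ^ (c k - 1 - 1) * x k = x k ^ (c k - 1) := by
        rw [← Real.rpow_add_one (hx k).ne']; norm_num
      rw [hs₀k k, ← hp, ← hq]
      ring
    calc (∑ k, (R - δv k) * x k *
          (deriv (fun y => w t y) s₀ * (c k * x k ^ (c k - 1) * Ck k)))
        + 1 / 2 * ∑ k, b k ^ 2 * x k ^ 2 *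
          (deriv (fun y => deriv (fun z => w t z) y) s₀ * (c k * x k ^ (c k - 1) * Ck k)
              * (c k * x k ^ (c k - 1) * Ck k)
            + deriv (fun y => w t y) s₀ * (c k * ((c k - 1) * x k ^ (c k - 1 - 1)) * Ck k))
        = ∑ k, ((R - δv k) * x k *
            (deriv (fun y => w t y) s₀ * (c k * x k ^ (c k - 1) * Ck k))
          + 1 / 2 * (b k ^ 2 * x k ^ 2 *
            (deriv (fun y => deriv (fun z => w t z) y) s₀ * (c k * x k ^ (c k - 1) * Ck k)
                * (c k * x k ^ (c k - 1) * Ck k)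
              + deriv (fun y => w t y) s₀
                * (c k * ((c k - 1) * x k ^ (c k - 1 - 1)) * Ck k)))) := by
          rw [Finset.mul_sum, ← Finset.sum_add_distrib]
      _ = ∑ k, ((R * c k - c k * (δv k + b k ^ 2 / 2) + (b k * c k) ^ 2 / 2)
            * (s₀ * deriv (fun y => w t y) s₀)
          + (b k * c k) ^ 2 / 2
            * (s₀ ^ 2 * deriv (fun y => deriv (fun z => w t z) y) s₀)) :=
          Finset.sum_congr rfl step
      _ = (R - δc) * s₀ * deriv (fun y => w t y) s₀
          + 1 / 2 * bc ^ 2 * s₀ ^ 2 * deriv (fun y => deriv (fun z => w t z) y) s₀ := by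
          rw [Finset.sum_add_distrib, ← Finset.sum_mul, ← Finset.sum_mul]
          simp only [Finset.sum_add_distrib, Finset.sum_sub_distrib, ← Finset.mul_sum,
            ← Finset.sum_div]
          rw [hcsum, hδc, hB]
          ring
  have hpde' := hpde t ht s₀ (Set.mem_Ioi.mpr hs₀)
  linear_combination hpde' + combined
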